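/- Every element of BS(1,p) with nonnegative t-exponent sum can be represented by a word of the form t⁻ᵏ a^{ε₀} t a^{ε₁} t ⋯ t a^{ε_q} t⁻ᵐ where k, m, q ≥ 0, q ≥ k + m, |ε_i| < p for 0 ≤ i < q, and |ε_q| < 3p, and moreover such a representative can be chosen with length at most that of any given representing word. -/

import Mathlib

/-- The single defining relation of `BS(1,p)`: `t a t⁻¹ a^{-p}`. -/
def BSrel (p : ℕ) : Set (FreeGroup Bool) :=
  {FreeGroup.of true * FreeGroup.of false * (FreeGroup.of true)⁻¹ * (FreeGroup.of false ^ p)⁻¹}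

/-- The solvable Baumslag–Solitar group `BS(1,p) = ⟨a, t | t a t⁻¹ = aᵖ⟩`. -/
abbrev BS (p : ℕ) : Type := PresentedGroup (BSrel p)

/-- The generator `a` of `BS(1,p)`. -/
def gena (p : ℕ) : BS p := PresentedGroup.of false

/-- The generator `t` of `BS(1,p)`. -/
def gent (p : ℕ) : BS p := PresentedGroup.of true

/-- A letter over the alphabet `{a, a⁻¹, t, t⁻¹}`: first component `false` = `a`,
`true` = `t`; second component is the sign (`true` = positive). -/
abbrev Letter : Type := Bool × Bool

/-- Value of a letter in `BS(1,p)`. -/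
def letterVal (p : ℕ) : Letter → BS p
  | (g, s) => (if g then gent p else gena p) ^ (if s then (1 : ℤ) else -1)

/-- The element of `BS(1,p)` represented by a word. -/
def wordVal (p : ℕ) (w : List Letter) : BS p := (w.map (letterVal p)).prod

def tP : Letter := (true, true)
def tN : Letter := (true, false)
def aP : Letter := (false, true)
def aN : Letter := (false, false)

/-- `t`-exponent sum of a word. -/
def texp (w : List Letter) : ℤ := (w.count tP : ℤ) - (w.count tN : ℤ)

/-- A word of type `P`: contains at least one `t` and no `t⁻¹`. -/
def TypeP (w : List Letter) : Prop := tP ∈ w ∧ tN ∉ w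

/-- A word of type `N`: contains at least one `t⁻¹` and no `t`. -/
def TypeN (w : List Letter) : Prop := tN ∈ w ∧ tP ∉ w

/-- The word `a^x` (as a string of `|x|` letters). -/
def aWord (x : ℤ) : List Letter := List.replicate x.natAbs (false, decide (0 < x))

/-- The word `a^{ε₀} t a^{ε₁} t ⋯ t a^{ε_q}`. -/
def stackWord (ε : ℕ → ℤ) (q : ℕ) : List Letter :=
  ((List.range q).map (fun i => aWord (ε i) ++ [tP])).flatten ++ aWord (ε q)

/-- The word `t⁻ᵏ a^{ε₀} t ⋯ t a^{ε_q} t⁻ᵐ`. -/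
def canonWord (k : ℕ) (ε : ℕ → ℤ) (q m : ℕ) : List Letter :=
  List.replicate k tN ++ stackWord ε q ++ List.replicate m tN

/-- `ℤ[1/p]` as an additive subgroup of `ℚ`. -/
def Zp (p : ℕ) : AddSubgroup ℚ := AddSubgroup.closure {x : ℚ | ∃ n : ℕ, x = ((p : ℚ))⁻¹ ^ n}


namespace Stmt8

lemma rel1 (p : ℕ) : gent p * gena p * (gent p)⁻¹ = gena p ^ p := by
  have h : ((QuotientGroup.mk (FreeGroup.of true * FreeGroup.of false * (FreeGroup.of true)⁻¹ *
      (FreeGroup.of false ^ p)⁻¹) : BS p)) = 1 := by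
    rw [QuotientGroup.eq_one_iff]
    exact Subgroup.subset_normalClosure rfl
  have h2 : gent p * gena p * (gent p)⁻¹ * (gena p ^ p)⁻¹ = 1 := by
    exact h
  have := mul_eq_one_iff_eq_inv.mp h2
  simpa using this

lemma t_conj_a (p : ℕ) (x : ℤ) : gent p * gena p ^ x * (gent p)⁻¹ = gena p ^ ((p : ℤ) * x) := by
  have h1 : (MulAut.conj (gent p)) (gena p ^ x) = ((MulAut.conj (gent p)) (gena p)) ^ x :=
    map_zpow _ _ _
  have h2 : (MulAut.conj (gent p)) (gena p) = gena p ^ (p : ℤ) := by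
    simp [MulAut.conj_apply, rel1 p, zpow_natCast]
  calc gent p * gena p ^ x * (gent p)⁻¹ = (MulAut.conj (gent p)) (gena p ^ x) := by
        simp [MulAut.conj_apply]
    _ = (gena p ^ (p : ℤ)) ^ x := by rw [h1, h2]
    _ = gena p ^ ((p : ℤ) * x) := by rw [← zpow_mul]

lemma t_mul_a (p : ℕ) (x : ℤ) : gent p * gena p ^ x = gena p ^ ((p : ℤ) * x) * gent p := by
  have := t_conj_a p x
  calc gent p * gena p ^ x = gent p * gena p ^ x * (gent p)⁻¹ * gent p := by group
    _ = gena p ^ ((p : ℤ) * x) * gent p := by rw [this]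

/-- K1 : T^n * A^x = A^(p^n x) * T^n -/
lemma tn_mul_a (p : ℕ) (n : ℕ) (x : ℤ) :
    gent p ^ (n : ℤ) * gena p ^ x = gena p ^ ((p : ℤ) ^ n * x) * gent p ^ (n : ℤ) := by
  induction n generalizing x with
  | zero => simp
  | succ n ih =>
    have : ((n+1 : ℕ) : ℤ) = (n : ℤ) + 1 := by push_cast; ring
    rw [this, zpow_add, zpow_one, mul_assoc, t_mul_a, ← mul_assoc, ih, mul_assoc,
      show (p:ℤ)^n * ((p:ℤ) * x) = (p:ℤ)^(n+1) * x by ring]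

/-- K2 : A^x * T^(-n) = T^(-n) * A^(p^n x) -/
lemma a_mul_tneg (p : ℕ) (n : ℕ) (x : ℤ) :
    gena p ^ x * gent p ^ (-(n : ℤ)) = gent p ^ (-(n : ℤ)) * gena p ^ ((p : ℤ) ^ n * x) := by
  have h := tn_mul_a p n x
  calc gena p ^ x * gent p ^ (-(n:ℤ))
      = gent p ^ (-(n:ℤ)) * (gent p ^ ((n:ℤ)) * gena p ^ x) * gent p ^ (-(n:ℤ)) := by group
    _ = gent p ^ (-(n:ℤ)) * (gena p ^ ((p:ℤ)^n * x) * gent p ^ ((n:ℤ))) * gent p ^ (-(n:ℤ)) := by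
        rw [h]
    _ = gent p ^ (-(n:ℤ)) * gena p ^ ((p:ℤ)^n * x) := by group




/-! ### integer division helpers -/

lemma neg_tmod (a b : ℤ) : (-a).tmod b = -(a.tmod b) := by
  rw [Int.tmod_def, Int.tmod_def, Int.neg_tdiv]; ring

lemma natAbs_tmod (P : ℕ) (e : ℤ) : (e.tmod P).natAbs = e.natAbs % P := by
  obtain ⟨n, hn | hn⟩ := e.eq_nat_or_neg <;> subst hn
  · rw [Int.tmod_eq_emod_of_nonneg (by positivity)]
    simp only [Int.natAbs_natCast]
    omega
  · rw [neg_tmod, Int.natAbs_neg, Int.natAbs_neg,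
      Int.tmod_eq_emod_of_nonneg (by positivity)]
    simp only [Int.natAbs_natCast]
    omega

lemma natAbs_tdiv' (P : ℕ) (e : ℤ) : (e.tdiv P).natAbs = e.natAbs / P := by
  rw [Int.natAbs_tdiv]; rfl

lemma tsplit (P : ℕ) (e : ℤ) : (P:ℤ) * e.tdiv P + e.tmod P = e := Int.mul_tdiv_add_tmod e P

/-! ### digits -/

variable (p : ℕ)

def Eval : List ℤ → ℤ
  | [] => 0
  | e :: l => e + p * Eval l

def SumA : List ℤ → ℕ
  | [] => 0
  | e :: l => e.natAbs + SumA l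

def Bnd : List ℤ → Prop
  | [] => True
  | [e] => e.natAbs < 3 * p
  | e :: l => e.natAbs < p ∧ Bnd l

lemma Bnd_cons {p : ℕ} {e : ℤ} {l : List ℤ} (hl : l ≠ []) (he : e.natAbs < p) (hB : Bnd p l) :
    Bnd p (e :: l) := by
  cases l with
  | nil => exact absurd rfl hl
  | cons a l => exact ⟨he, hB⟩

lemma Bnd_cons_elim {p : ℕ} {e : ℤ} {l : List ℤ} (hl : l ≠ []) (hB : Bnd p (e :: l)) :
    e.natAbs < p ∧ Bnd p l := by
  cases l with
  | nil => exact absurd rfl hl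
  | cons a l => exact hB

/-- the carry operation at the bottom digit -/
def addCarry : List ℤ → ℤ → List ℤ
  | [], c => [c]
  | [e], c => if (e + c).natAbs < 3 * p then [e + c] else [0, (e + c).tdiv p]
  | e :: l, c => if (e + c).natAbs < p then (e + c) :: l else 0 :: addCarry l ((e + c).tdiv p)

/-- add `c` at digit position `j` -/
def addAt : List ℤ → ℕ → ℤ → List ℤ
  | l, 0, c => addCarry p l c
  | [], _+1, _ => []
  | e :: l, j+1, c => e :: addAt l j c

lemma exact_carry {p : ℕ} (hp : 2 ≤ p) {e c : ℤ} (he : e.natAbs < p) (hc : c.natAbs ≤ 1)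
    (h : ¬ (e + c).natAbs < p) :
    (p:ℤ) * (e + c).tdiv p = e + c ∧ ((e + c).tdiv p).natAbs = 1 := by
  have habs : (e + c).natAbs = p := by
    have := Int.natAbs_add_le e c
    omega
  have hd : e + c = (p:ℤ) ∨ e + c = -(p:ℤ) := by omega
  have hP0 : (p:ℤ) ≠ 0 := by omega
  rcases hd with hd | hd <;> rw [hd]
  · rw [Int.tdiv_self hP0]; omega
  · rw [show -(p:ℤ) = -1 * (p:ℤ) by ring, Int.mul_tdiv_cancel _ hP0]
    constructor
    · ring
    · rfl

lemma exact_carry3 {p : ℕ} (hp : 2 ≤ p) {e c : ℤ} (he : e.natAbs < 3 * p) (hc : c.natAbs ≤ 1)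
    (h : ¬ (e + c).natAbs < 3 * p) :
    (p:ℤ) * (e + c).tdiv p = e + c ∧ ((e + c).tdiv p).natAbs = 3 := by
  have habs : (e + c).natAbs = 3 * p := by
    have := Int.natAbs_add_le e c
    omega
  have hd : e + c = 3 * (p:ℤ) ∨ e + c = -3 * (p:ℤ) := by omega
  have hP0 : (p:ℤ) ≠ 0 := by omega
  rcases hd with hd | hd <;> rw [hd, Int.mul_tdiv_cancel _ hP0]
  · constructor
    · ring
    · rfl
  · constructor
    · ring
    · rfl

section carry
variable {p : ℕ} (hp : 2 ≤ p)
include hp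

lemma addCarry_ne_nil (l : List ℤ) (c : ℤ) : addCarry p l c ≠ [] := by
  match l with
  | [] => simp [addCarry]
  | [e] => unfold addCarry; split <;> simp
  | e :: a :: l => unfold addCarry; split <;> simp

lemma addCarry_length (l : List ℤ) (c : ℤ) :
    l.length ≤ (addCarry p l c).length ∧ (addCarry p l c).length ≤ l.length + 1 := by
  induction l generalizing c with
  | nil => simp [addCarry]
  | cons e l ih =>
    match l with
    | [] => unfold addCarry; split <;> simp
    | a :: l' =>
      unfold addCarry; split
      · simp
      · have := ih (c := ((e + c).tdiv p))
        simp only [List.length_cons] at *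
        omega

lemma addCarry_eval {l : List ℤ} {c : ℤ} (hB : Bnd p l) (hc : c.natAbs ≤ 1) :
    Eval p (addCarry p l c) = c + Eval p l := by
  induction l generalizing c with
  | nil => simp [addCarry, Eval]
  | cons e l ih =>
    match l with
    | [] =>
      unfold addCarry; split
      · simp [Eval]; ring
      · obtain ⟨h3a, h3b⟩ := exact_carry3 hp (by simpa [Bnd] using hB) hc (by assumption)
        simp [Eval]
        linarith [h3a]
    | a :: l' =>
      obtain ⟨he, hB'⟩ := Bnd_cons_elim (by simp) hB
      unfold addCarry; split
      · simp [Eval]; ring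
      · obtain ⟨h2a, h2b⟩ := exact_carry hp he hc (by assumption)
        have ihh := ih hB' (c := ((e + c).tdiv p)) h2b.le
        simp [Eval, ihh]
        linarith [h2a]

lemma addCarry_bnd {l : List ℤ} {c : ℤ} (hl : l ≠ []) (hB : Bnd p l) (hc : c.natAbs ≤ 1) :
    Bnd p (addCarry p l c) := by
  induction l generalizing c with
  | nil => exact absurd rfl hl
  | cons e l ih =>
    match l with
    | [] =>
      unfold addCarry; split
      · simpa [Bnd] using (by assumption : (e+c).natAbs < 3*p)
      · obtain ⟨h3a, h3b⟩ := exact_carry3 hp (by simpa [Bnd] using hB) hc (by assumption)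
        refine Bnd_cons (by simp) (by simp; omega) ?_
        simpa [Bnd] using (by rw [h3b]; omega : ((e + c).tdiv p).natAbs < 3 * p)
    | a :: l' =>
      obtain ⟨he, hB'⟩ := Bnd_cons_elim (by simp) hB
      unfold addCarry; split
      · exact Bnd_cons (by simp) (by assumption) hB'
      · obtain ⟨h2a, h2b⟩ := exact_carry hp he hc (by assumption)
        exact Bnd_cons (addCarry_ne_nil hp _ _) (by simp; omega) (ih (by simp) hB' h2b.le)

lemma addCarry_cost {l : List ℤ} {c : ℤ} (hl : l ≠ []) (hB : Bnd p l) (hc : c.natAbs ≤ 1) :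
    SumA (addCarry p l c) + 2 * (addCarry p l c).length ≤ SumA l + c.natAbs + 2 * l.length := by
  induction l generalizing c with
  | nil => exact absurd rfl hl
  | cons e l ih =>
    match l with
    | [] =>
      unfold addCarry; split
      · have := Int.natAbs_add_le e c
        simp only [SumA, List.length_cons, List.length_nil]
        omega
      · obtain ⟨h3a, h3b⟩ := exact_carry3 hp (by simpa [Bnd] using hB) hc (by assumption)
        have habs : (e + c).natAbs = 3 * p := by
          have := Int.natAbs_add_le e c
          have : ¬ (e+c).natAbs < 3*p := by assumption
          have hee : e.natAbs < 3*p := by simpa [Bnd] using hB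
          omega
        simp only [SumA, List.length_cons, List.length_nil, Int.natAbs_zero]
        omega
    | a :: l' =>
      obtain ⟨he, hB'⟩ := Bnd_cons_elim (by simp) hB
      unfold addCarry; split
      · have := Int.natAbs_add_le e c
        simp [SumA]; omega
      · obtain ⟨h2a, h2b⟩ := exact_carry hp he hc (by assumption)
        have habs : (e + c).natAbs = p := by
          have := Int.natAbs_add_le e c
          have : ¬ (e+c).natAbs < p := by assumption
          omega
        have ihh := ih (by simp) hB' (c := ((e + c).tdiv p)) h2b.le
        simp only [SumA, List.length_cons] at *
        omega

lemma addAt_ne_nil (l : List ℤ) (j : ℕ) (c : ℤ) (hj : j < l.length) : addAt p l j c ≠ [] := by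
  induction l generalizing j with
  | nil => simp at hj
  | cons e l ih =>
    match j with
    | 0 => exact addCarry_ne_nil hp _ _
    | j+1 => simp [addAt]

lemma addAt_length (l : List ℤ) (j : ℕ) (c : ℤ) (hj : j < l.length) :
    l.length ≤ (addAt p l j c).length ∧ (addAt p l j c).length ≤ l.length + 1 := by
  induction l generalizing j with
  | nil => simp at hj
  | cons e l ih =>
    match j with
    | 0 => exact addCarry_length hp _ _
    | j+1 =>
      have := ih (j := j) (by simpa using hj)
      simp only [addAt, List.length_cons]
      omega

lemma addAt_eval {l : List ℤ} {j : ℕ} {c : ℤ} (hj : j < l.length) (hB : Bnd p l)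
    (hc : c.natAbs ≤ 1) :
    Eval p (addAt p l j c) = Eval p l + (p:ℤ)^j * c := by
  induction l generalizing j with
  | nil => simp at hj
  | cons e l ih =>
    match j with
    | 0 =>
      have := addCarry_eval hp hB hc (c := c)
      simpa [addAt, this] using by ring
    | j+1 =>
      have hl : l ≠ [] := by
        cases l
        · simp at hj
        · simp
      obtain ⟨he, hB'⟩ := Bnd_cons_elim hl hB
      have := ih (by simpa using hj) hB'
      simp only [addAt, Eval, this]
      ring

lemma addAt_bnd {l : List ℤ} {j : ℕ} {c : ℤ} (hj : j < l.length) (hB : Bnd p l)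
    (hc : c.natAbs ≤ 1) : Bnd p (addAt p l j c) := by
  induction l generalizing j with
  | nil => simp at hj
  | cons e l ih =>
    match j with
    | 0 => exact addCarry_bnd hp (by simp) hB hc
    | j+1 =>
      have hl : l ≠ [] := by
        cases l
        · simp at hj
        · simp
      obtain ⟨he, hB'⟩ := Bnd_cons_elim hl hB
      exact Bnd_cons (addAt_ne_nil hp _ _ _ (by simpa using hj)) he
        (ih (by simpa using hj) hB')

lemma addAt_cost {l : List ℤ} {j : ℕ} {c : ℤ} (hj : j < l.length) (hB : Bnd p l)
    (hc : c.natAbs ≤ 1) :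
    SumA (addAt p l j c) + 2 * (addAt p l j c).length ≤ SumA l + c.natAbs + 2 * l.length := by
  induction l generalizing j with
  | nil => simp at hj
  | cons e l ih =>
    match j with
    | 0 => exact addCarry_cost hp (by simp) hB hc
    | j+1 =>
      have hl : l ≠ [] := by
        cases l
        · simp at hj
        · simp
      obtain ⟨he, hB'⟩ := Bnd_cons_elim hl hB
      have := ih (by simpa using hj) hB'
      simp only [addAt, SumA, List.length_cons] at *
      omega

/-! ### pushT : splitting the last digit when a `t` is appended -/

def pushT (p : ℕ) : List ℤ → List ℤ
  | [] => []
  | [e] => [e.tmod p, e.tdiv p]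
  | e :: l => e :: pushT p l

lemma pushT_length (l : List ℤ) (hl : l ≠ []) : (pushT p l).length = l.length + 1 := by
  induction l with
  | nil => exact absurd rfl hl
  | cons e l ih =>
    match l with
    | [] => simp [pushT]
    | a :: l' =>
      simp only [pushT, List.length_cons]
      rw [ih (by simp)]
      simp

lemma pushT_eval (l : List ℤ) : Eval p (pushT p l) = Eval p l := by
  induction l with
  | nil => simp [pushT]
  | cons e l ih =>
    match l with
    | [] => simp [pushT, Eval]; linarith [tsplit p e]
    | a :: l' =>
      simp only [pushT, Eval]
      rw [ih]
      simp [Eval]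

lemma pushT_bnd {l : List ℤ} (hB : Bnd p l) : Bnd p (pushT p l) := by
  induction l with
  | nil => simp [pushT, Bnd]
  | cons e l ih =>
    match l with
    | [] =>
      have he : e.natAbs < 3*p := by simpa [Bnd] using hB
      have h1 : (e.tmod p).natAbs < p := by
        rw [natAbs_tmod]; exact Nat.mod_lt _ (by omega)
      have h2 : (e.tdiv p).natAbs < 3 * p := by
        rw [natAbs_tdiv']
        have : e.natAbs / p < 3 := by
          rw [Nat.div_lt_iff_lt_mul (by omega)]; omega
        omega
      exact Bnd_cons (by simp) h1 (by simpa [Bnd] using h2)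
    | a :: l' =>
      obtain ⟨he, hB'⟩ := Bnd_cons_elim (by simp) hB
      exact Bnd_cons (by cases l' <;> simp [pushT]) he (ih hB')

lemma pushT_sumA (l : List ℤ) : SumA (pushT p l) ≤ SumA l := by
  induction l with
  | nil => simp [pushT]
  | cons e l ih =>
    match l with
    | [] =>
      simp only [pushT, SumA]
      rw [natAbs_tmod, natAbs_tdiv']
      have h1 := Nat.div_add_mod e.natAbs p
      have h2 : e.natAbs / p ≤ p * (e.natAbs / p) := Nat.le_mul_of_pos_left _ (by omega)
      omega
    | a :: l' =>
      have := ih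
      simp only [pushT, SumA] at *
      omega

/-! ### prepending zeros -/

lemma replicate_eval (j : ℕ) (l : List ℤ) :
    Eval p (List.replicate j 0 ++ l) = (p:ℤ)^j * Eval p l := by
  induction j with
  | zero => simp
  | succ j ih =>
    simp only [List.replicate_succ, List.cons_append, Eval, List.append_eq, ih]
    ring

lemma replicate_sumA (j : ℕ) (l : List ℤ) : SumA (List.replicate j 0 ++ l) = SumA l := by
  induction j with
  | zero => simp
  | succ j ih =>
    simp only [List.replicate_succ, List.cons_append, SumA, List.append_eq, ih]
    simp

lemma replicate_bnd (j : ℕ) {l : List ℤ} (hl : l ≠ []) (hB : Bnd p l) :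
    Bnd p (List.replicate j 0 ++ l) := by
  induction j with
  | zero => simpa
  | succ j ih =>
    simp only [List.replicate_succ, List.cons_append]
    refine Bnd_cons ?_ (by omega) ih
    simp [hl]

end carry

/-! ### getD bridges -/

lemma eval_getD {p : ℕ} (L : List ℤ) (hL : L ≠ []) :
    Eval p L = ∑ i ∈ Finset.range ((L.length - 1) + 1), L.getD i 0 * (p:ℤ)^i := by
  induction L with
  | nil => exact absurd rfl hL
  | cons e l ih =>
    match l with
    | [] => simp [Eval]
    | a :: l' =>
      have h1 : (e :: a :: l').length - 1 + 1 = ((a :: l').length - 1 + 1) + 1 := by simp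
      rw [h1, Finset.sum_range_succ']
      have h2 : ∀ i, (e :: a :: l').getD (i+1) 0 = (a :: l').getD i 0 := fun i => rfl
      simp only [h2, List.getD_cons_zero, pow_zero, mul_one]
      rw [show (Eval p (e :: a :: l')) = e + p * Eval p (a :: l') from rfl, ih (by simp)]
      rw [Finset.mul_sum]
      rw [add_comm]
      congr 1
      apply Finset.sum_congr rfl
      intro i _
      ring

lemma sumA_getD (L : List ℤ) (hL : L ≠ []) :
    SumA L = ∑ i ∈ Finset.range ((L.length - 1) + 1), (L.getD i 0).natAbs := by
  induction L with
  | nil => exact absurd rfl hL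
  | cons e l ih =>
    match l with
    | [] => simp [SumA]
    | a :: l' =>
      have h1 : (e :: a :: l').length - 1 + 1 = ((a :: l').length - 1 + 1) + 1 := by simp
      rw [h1, Finset.sum_range_succ']
      have h2 : ∀ i, (e :: a :: l').getD (i+1) 0 = (a :: l').getD i 0 := fun i => rfl
      simp only [h2, List.getD_cons_zero]
      rw [show (SumA (e :: a :: l')) = e.natAbs + SumA (a :: l') from rfl, ih (by simp)]
      omega

lemma bnd_getD {p : ℕ} {L : List ℤ} (hL : L ≠ []) (hB : Bnd p L) :
    (∀ i, i < L.length - 1 → (L.getD i 0).natAbs < p) ∧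
    (L.getD (L.length - 1) 0).natAbs < 3 * p := by
  induction L with
  | nil => exact absurd rfl hL
  | cons e l ih =>
    match l with
    | [] =>
      refine ⟨fun i hi => by simp at hi, ?_⟩
      simpa [Bnd] using hB
    | a :: l' =>
      obtain ⟨he, hB'⟩ := Bnd_cons_elim (by simp) hB
      obtain ⟨ih1, ih2⟩ := ih (by simp) hB'
      constructor
      · intro i hi
        match i with
        | 0 => simpa using he
        | i+1 =>
          have : (e :: a :: l').getD (i+1) 0 = (a :: l').getD i 0 := rfl
          rw [this]
          exact ih1 i (by simpa using hi)
      · have : (e :: a :: l').length - 1 = ((a :: l').length - 1) + 1 := by simp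
        rw [this]
        exact ih2


section part3
variable {p : ℕ}

/-! ### wordVal basics -/

lemma wv_append (u v : List Letter) : wordVal p (u ++ v) = wordVal p u * wordVal p v := by
  simp [wordVal]

lemma wv_nil : wordVal p [] = 1 := rfl

lemma wv_singleton (x : Letter) : wordVal p [x] = letterVal p x := by simp [wordVal]

lemma wv_replicate (n : ℕ) (x : Letter) :
    wordVal p (List.replicate n x) = letterVal p x ^ n := by
  induction n with
  | zero => simp [wordVal]
  | succ n ih =>
    rw [List.replicate_succ, show (x :: List.replicate n x) = [x] ++ List.replicate n x from rfl,
      wv_append, ih, wv_singleton, pow_succ]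
    group

lemma lv_tP : letterVal p tP = gent p := by simp [letterVal, tP]

lemma lv_tN : letterVal p tN = (gent p)⁻¹ := by
  simp [letterVal, tN]

lemma wv_tNs (n : ℕ) : wordVal p (List.replicate n tN) = gent p ^ (-(n:ℤ)) := by
  rw [wv_replicate, lv_tN, inv_pow, ← zpow_natCast, ← zpow_neg]

lemma wv_aWord (x : ℤ) : wordVal p (aWord x) = gena p ^ x := by
  rcases lt_trichotomy x 0 with hx | hx | hx
  · have : aWord x = List.replicate x.natAbs (false, false) := by
      simp [aWord, not_lt_of_gt hx, decide_eq_false]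
    rw [this, wv_replicate]
    have : letterVal p (false, false) = (gena p)⁻¹ := by simp [letterVal]
    rw [this, inv_pow, ← zpow_natCast, ← zpow_neg]
    congr 1
    omega
  · subst hx; simp [aWord, wordVal]
  · have : aWord x = List.replicate x.natAbs (false, true) := by simp [aWord, hx]
    rw [this, wv_replicate]
    have : letterVal p (false, true) = gena p := by simp [letterVal]
    rw [this, ← zpow_natCast]
    congr 1
    omega

lemma len_aWord (x : ℤ) : (aWord x).length = x.natAbs := by simp [aWord]

/-! ### stackWord -/

def SumE (p : ℕ) (ε : ℕ → ℤ) (q : ℕ) : ℤ := ∑ i ∈ Finset.range (q+1), ε i * (p:ℤ)^i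

lemma stack_zero (ε : ℕ → ℤ) : stackWord ε 0 = aWord (ε 0) := by simp [stackWord]

lemma stack_succ (ε : ℕ → ℤ) (q : ℕ) :
    stackWord ε (q+1) = (aWord (ε 0) ++ [tP]) ++ stackWord (fun i => ε (i+1)) q := by
  simp only [stackWord, List.range_succ_eq_map, List.map_cons, List.map_map, List.flatten_cons,
    List.append_assoc]
  congr 2

lemma sumE_succ (ε : ℕ → ℤ) (q : ℕ) :
    SumE p ε (q+1) = ε 0 + (p:ℤ) * SumE p (fun i => ε (i+1)) q := by
  rw [SumE, Finset.sum_range_succ']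
  simp only [pow_zero, mul_one]
  rw [SumE, Finset.mul_sum, add_comm]
  congr 1
  apply Finset.sum_congr rfl
  intro i _
  ring

lemma wv_stack (ε : ℕ → ℤ) (q : ℕ) :
    wordVal p (stackWord ε q) = gena p ^ (SumE p ε q) * gent p ^ ((q:ℤ)) := by
  induction q generalizing ε with
  | zero => simp [stack_zero, wv_aWord, SumE]
  | succ q ih =>
    rw [stack_succ, wv_append, wv_append, wv_singleton, lv_tP, wv_aWord, ih, sumE_succ]
    have h1 : gent p * (gena p ^ (SumE p (fun i => ε (i+1)) q) * gent p ^ ((q:ℤ))) =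
        gena p ^ ((p:ℤ) * SumE p (fun i => ε (i+1)) q) * gent p ^ ((q:ℤ)+1) := by
      rw [← mul_assoc, t_mul_a, mul_assoc, zpow_add, zpow_one]
      group
    rw [mul_assoc, h1, ← mul_assoc, ← zpow_add]
    push_cast
    ring_nf

lemma len_stack (ε : ℕ → ℤ) (q : ℕ) :
    (stackWord ε q).length = q + ∑ i ∈ Finset.range (q+1), (ε i).natAbs := by
  induction q generalizing ε with
  | zero => simp [stack_zero, len_aWord]
  | succ q ih =>
    rw [stack_succ, Finset.sum_range_succ']
    simp only [List.length_append, len_aWord, List.length_singleton, ih]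
    omega

/-! ### canonWord -/

lemma wv_canon (k : ℕ) (ε : ℕ → ℤ) (q m : ℕ) :
    wordVal p (canonWord k ε q m) =
      gent p ^ (-(k:ℤ)) * gena p ^ (SumE p ε q) * gent p ^ ((q:ℤ) - m) := by
  rw [canonWord, wv_append, wv_append, wv_tNs, wv_tNs, wv_stack]
  rw [show ((q:ℤ) - m) = (q:ℤ) + (-(m:ℤ)) by ring, zpow_add]
  group

lemma len_canon (k : ℕ) (ε : ℕ → ℤ) (q m : ℕ) :
    (canonWord k ε q m).length = k + m + q + ∑ i ∈ Finset.range (q+1), (ε i).natAbs := by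
  simp [canonWord, len_stack]
  omega

/-! ### the t-exponent homomorphism -/

def phi (p : ℕ) : BS p →* Multiplicative ℤ :=
  PresentedGroup.toGroup (f := fun b => Multiplicative.ofAdd (if b then 1 else 0)) (by
    intro r hr
    rcases hr with rfl
    simp [map_mul, map_inv, map_pow])

lemma phi_t : phi p (gent p) = Multiplicative.ofAdd 1 := by
  simp [phi, gent, PresentedGroup.toGroup.of]

lemma phi_a : phi p (gena p) = 1 := by
  simp [phi, gena, PresentedGroup.toGroup.of]

lemma texp_cons (x : Letter) (u : List Letter) :
    texp (x :: u) = texp u + (if x = tP then 1 else 0) - (if x = tN then 1 else 0) := by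
  simp only [texp, List.count_cons]
  have : (tP = tN) = False := by simp [tP, tN]
  rcases Classical.em (x = tP) with h | h <;> rcases Classical.em (x = tN) with h2 | h2 <;>
    simp_all [tP, tN] <;> push_cast <;> ring

lemma phi_wordVal (u : List Letter) :
    phi p (wordVal p u) = Multiplicative.ofAdd (texp u) := by
  induction u with
  | nil => simp [wv_nil, texp]
  | cons x u ih =>
    have hw : wordVal p (x :: u) = letterVal p x * wordVal p u := by
      rw [show (x :: u) = [x] ++ u from rfl, wv_append, wv_singleton]
    rw [hw, map_mul, ih, texp_cons]
    obtain ⟨g, s⟩ := x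
    have hlv : phi p (letterVal p (g, s)) =
        Multiplicative.ofAdd ((if g then 1 else 0) * (if s then 1 else -1)) := by
      rw [letterVal]
      cases g <;> cases s <;>
        simp [map_zpow, phi_t, phi_a] <;> rfl
    rw [hlv, ← ofAdd_add]
    congr 1
    cases g <;> cases s <;> simp [tP, tN] <;> ring

end part3

section part4
variable {p : ℕ}

lemma key_digit (p k : ℕ) (E x : ℤ) (j : ℕ) :
    gent p ^ (-(k:ℤ)) * gena p ^ (E + (p:ℤ)^j * x) * gent p ^ ((j:ℤ))
      = gent p ^ (-(k:ℤ)) * gena p ^ E * gent p ^ ((j:ℤ)) * gena p ^ x := by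
  calc
    gent p ^ (-(k:ℤ)) * gena p ^ (E + (p:ℤ)^j * x) * gent p ^ ((j:ℤ))
        = gent p ^ (-(k:ℤ)) * (gena p ^ E * (gena p ^ ((p:ℤ)^j * x) * gent p ^ ((j:ℤ)))) := by
          rw [zpow_add]; group
    _ = gent p ^ (-(k:ℤ)) * (gena p ^ E * (gent p ^ ((j:ℤ)) * gena p ^ x)) := by
          rw [← tn_mul_a]
    _ = gent p ^ (-(k:ℤ)) * gena p ^ E * gent p ^ ((j:ℤ)) * gena p ^ x := by
          group

lemma key_bad (p k : ℕ) (E x : ℤ) (d : ℕ) :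
    gent p ^ (-((k+d : ℕ):ℤ)) * gena p ^ (x + (p:ℤ)^d * E)
      = gent p ^ (-(k:ℤ)) * gena p ^ E * gent p ^ (-(d:ℤ)) * gena p ^ x := by
  calc
    gent p ^ (-((k+d:ℕ):ℤ)) * gena p ^ (x + (p:ℤ)^d * E)
        = gent p ^ (-(k:ℤ)) * (gent p ^ (-(d:ℤ)) * gena p ^ ((p:ℤ)^d * E)) * gena p ^ x := by
          rw [show (-((k+d:ℕ):ℤ)) = (-(k:ℤ)) + (-(d:ℤ)) by push_cast; ring, zpow_add,
            show (x + (p:ℤ)^d * E) = ((p:ℤ)^d * E) + x by ring, zpow_add]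
          group
    _ = gent p ^ (-(k:ℤ)) * (gena p ^ E * gent p ^ (-(d:ℤ))) * gena p ^ x := by
          rw [← a_mul_tneg]
    _ = gent p ^ (-(k:ℤ)) * gena p ^ E * gent p ^ (-(d:ℤ)) * gena p ^ x := by
          group

def rval (p k : ℕ) (L : List ℤ) (m : ℕ) : BS p :=
  gent p ^ (-(k:ℤ)) * gena p ^ (Eval p L) * gent p ^ (((L.length - 1 : ℕ) : ℤ) - (m:ℤ))

def Inv (p : ℕ) (u : List Letter) : Prop :=
  ∃ (k m : ℕ) (L : List ℤ), L ≠ [] ∧ Bnd p L ∧ rval p k L m = wordVal p u ∧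
    k + m + (L.length - 1) + SumA L + 2 * (m - (L.length - 1)) + 2 * (k - (L.length - 1))
      ≤ u.length + 2 * (k + m - (L.length - 1))

lemma inv_nil (hp : 2 ≤ p) : Inv p [] := by
  refine ⟨0, 0, [0], by simp, ?_, ?_, ?_⟩
  · simpa [Bnd] using (by omega : 0 < 3*p)
  · simp [rval, Eval, wv_nil]
  · simp [SumA]

lemma inv_step (hp : 2 ≤ p) (u : List Letter) (x : Letter) (h : Inv p u) : Inv p (u ++ [x]) := by
  obtain ⟨k, m, L, hL, hB, hv, hc⟩ := h
  have hlen1 : 1 ≤ L.length := List.length_pos_iff.mpr hL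
  have hwv : wordVal p (u ++ [x]) = wordVal p u * letterVal p x := by
    rw [wv_append, wv_singleton]
  have hlenu : (u ++ [x]).length = u.length + 1 := by simp
  obtain ⟨g, s⟩ := x
  cases g
  case true =>
    cases s
    case false =>
      refine ⟨k, m+1, L, hL, hB, ?_, ?_⟩
      · rw [hwv, ← hv, show letterVal p (true, false) = (gent p)⁻¹ from lv_tN]
        rw [rval, rval,
          show (((L.length - 1 : ℕ) : ℤ) - ((m+1 : ℕ):ℤ))
            = (((L.length - 1 : ℕ) : ℤ) - (m:ℤ)) + (-1) by push_cast; ring,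
          zpow_add]
        group
      · rw [hlenu]; omega
    case true =>
      match m with
      | Nat.succ m' =>
        refine ⟨k, m', L, hL, hB, ?_, ?_⟩
        · rw [hwv, ← hv, show letterVal p (true, true) = gent p from lv_tP]
          rw [rval, rval,
            show (((L.length - 1 : ℕ) : ℤ) - ((m':ℕ):ℤ))
              = (((L.length - 1 : ℕ) : ℤ) - ((m'+1 : ℕ):ℤ)) + 1 by push_cast; ring,
            zpow_add]
          group
          congr 2
          omega
        · rw [hlenu]
          simp only [Nat.succ_eq_add_one] at hc ⊢
          omega
      | 0 =>
        refine ⟨k, 0, pushT p L, ?_, pushT_bnd hp hB, ?_, ?_⟩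
        · have := pushT_length hp L hL
          intro hnil; rw [hnil] at this; simp at this
        · rw [hwv, ← hv, show letterVal p (true, true) = gent p from lv_tP]
          rw [rval, rval, pushT_eval hp, pushT_length hp L hL,
            show (((L.length + 1 - 1 : ℕ) : ℤ) - ((0:ℕ):ℤ))
              = (((L.length - 1 : ℕ) : ℤ) - ((0:ℕ):ℤ)) + 1 by omega,
            zpow_add]
          group
        · have h1 := pushT_length hp L hL
          have h2 := pushT_sumA hp L
          rw [hlenu, h1]; omega
  case false =>
    have hlv : letterVal p (false, s) = gena p ^ (if s then (1:ℤ) else -1) := rfl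
    set σ : ℤ := if s then 1 else -1 with hσdef
    have hs1 : σ.natAbs ≤ 1 := by cases s <;> simp [hσdef]
    by_cases hm : m ≤ L.length - 1
    · -- digit add at depth m
      have hj : (L.length - 1) - m < L.length := by omega
      set j := (L.length - 1) - m with hjdef
      have hE := addAt_eval hp hj hB hs1
      have hlen := addAt_length hp L j σ hj
      have hBd := addAt_bnd hp hj hB hs1
      have hcost := addAt_cost hp hj hB hs1
      have hne := addAt_ne_nil hp L j σ hj
      refine ⟨k, m + ((addAt p L j σ).length - L.length), addAt p L j σ, hne, hBd, ?_, ?_⟩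
      · rw [hwv, ← hv, hlv, rval, rval, hE]
        have hc1 : (((L.length - 1 : ℕ) : ℤ) - (m:ℤ)) = (j:ℤ) := by omega
        have hc2 : ((((addAt p L j σ).length - 1 : ℕ) : ℤ)
            - ((m + ((addAt p L j σ).length - L.length) : ℕ):ℤ)) = (j:ℤ) := by omega
        rw [hc1, hc2]
        exact key_digit p k (Eval p L) σ j
      · rw [hlenu]; omega
    · -- m exceeds the stack depth : extend on the left
      have hd1 : 1 ≤ m - (L.length - 1) := by omega
      set d := m - (L.length - 1) with hddef
      have hrep : (List.replicate (d-1) 0 ++ L) ≠ [] := by simp [hL]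
      have hlenL' : (σ :: (List.replicate (d-1) 0 ++ L)).length = d + L.length := by
        simp; omega
      have hEL' : Eval p (σ :: (List.replicate (d-1) 0 ++ L)) = σ + (p:ℤ)^d * Eval p L := by
        have h1 : Eval p (σ :: (List.replicate (d-1) 0 ++ L))
            = σ + (p:ℤ) * Eval p (List.replicate (d-1) 0 ++ L) := rfl
        rw [h1, replicate_eval hp, ← mul_assoc,
          show ((p:ℤ)) * (p:ℤ)^(d-1) = (p:ℤ)^(d-1+1) by ring,
          show d - 1 + 1 = d by omega]
      have hBd : Bnd p (σ :: (List.replicate (d-1) 0 ++ L)) :=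
        Bnd_cons hrep (by omega) (replicate_bnd hp (d-1) hL hB)
      have hSum : SumA (σ :: (List.replicate (d-1) 0 ++ L)) = σ.natAbs + SumA L := by
        have h1 : SumA (σ :: (List.replicate (d-1) 0 ++ L))
            = σ.natAbs + SumA (List.replicate (d-1) 0 ++ L) := rfl
        rw [h1, replicate_sumA hp]
      refine ⟨k + d, m, σ :: (List.replicate (d-1) 0 ++ L), by simp, hBd, ?_, ?_⟩
      · rw [hwv, ← hv, hlv, rval, rval, hEL', hlenL']
        have hc1 : (((L.length - 1 : ℕ) : ℤ) - (m:ℤ)) = -(d:ℤ) := by omega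
        have hc2 : (((d + L.length - 1 : ℕ) : ℤ) - (m:ℤ)) = 0 := by omega
        rw [hc1, hc2, zpow_zero, mul_one]
        exact key_bad p k (Eval p L) σ d
      · rw [hlenu, hlenL', hSum]; omega

end part4

section part5
variable {p : ℕ}

lemma phi_rval (k : ℕ) (L : List ℤ) (m : ℕ) :
    phi p (rval p k L m)
      = Multiplicative.ofAdd (-(k:ℤ) + ((((L.length - 1 : ℕ)) : ℤ) - (m:ℤ))) := by
  rw [rval, map_mul, map_mul, map_zpow, map_zpow, map_zpow, phi_t, phi_a, one_zpow, mul_one]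
  rw [← ofAdd_zsmul, ← ofAdd_zsmul, ← ofAdd_add]
  simp

lemma inv_all (hp : 2 ≤ p) (u : List Letter) : Inv p u := by
  induction u using List.reverseRecOn with
  | nil => exact inv_nil hp
  | append_singleton v y ih => exact inv_step hp v y ih

end part5

theorem stmt8' (p : ℕ) (hp : 2 ≤ p) (w : List Letter) (h : 0 ≤ texp w) :
    ∃ (k m q : ℕ) (ε : ℕ → ℤ), k + m ≤ q ∧
      (∀ i < q, (ε i).natAbs < p) ∧ (ε q).natAbs < 3 * p ∧
      wordVal p (canonWord k ε q m) = wordVal p w ∧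
      (canonWord k ε q m).length ≤ w.length := by
  obtain ⟨k, m, L, hL, hB, hv, hc⟩ := inv_all hp w
  have hlen1 : 1 ≤ L.length := List.length_pos_iff.mpr hL
  -- the t-exponent of the representative
  have htexp : -(k:ℤ) + ((((L.length - 1 : ℕ)) : ℤ) - (m:ℤ)) = texp w := by
    have h1 := congrArg (phi p) hv
    rw [phi_rval, phi_wordVal] at h1
    exact Multiplicative.ofAdd.injective h1
  have hkm : k + m ≤ L.length - 1 := by omega
  refine ⟨k, m, L.length - 1, fun i => L.getD i 0, hkm, ?_, ?_, ?_, ?_⟩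
  · exact (bnd_getD hL hB).1
  · exact (bnd_getD hL hB).2
  · rw [hv.symm, wv_canon, rval]
    congr 2
    rw [SumE, eval_getD L hL]
  · rw [len_canon, ← sumA_getD L hL]
    omega

end Stmt8

/-- every word with nonnegative `t`-exponent sum is represented by a word
`t⁻ᵏ a^{ε₀} t ⋯ t a^{ε_q} t⁻ᵐ` with `q ≥ k + m`, `|ε_i| < p` for `i < q`, `|ε_q| < 3p`,
of length at most that of the given word. -/
theorem stmt8 (p : ℕ) (hp : 2 ≤ p) (w : List Letter) (h : 0 ≤ texp w) :
    ∃ (k m q : ℕ) (ε : ℕ → ℤ), k + m ≤ q ∧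
      (∀ i < q, (ε i).natAbs < p) ∧ (ε q).natAbs < 3 * p ∧
      wordVal p (canonWord k ε q m) = wordVal p w ∧
      (canonWord k ε q m).length ≤ w.length := by
  exact Stmt8.stmt8' p hp w h
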